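/- Define f : ℤ → ℚ by f(−2) = 1/36, f(−1) = 1/6, f(0) = 1, f(1) = 8, and f(m) = 8f(m−1) − f(m−2) + 6f(m−3) for all m ≥ 2. Then for every m ≥ 1, f(m) equals the cardinality of the OS-LOCO code OSC(m). -/
import Mathlib


/-- The OS-LOCO code: words of length `m` over the alphabet `{0,...,7}`
(position `m-1` most significant) containing no contiguous subword `0 2 0`
and no contiguous subword `7 5 7`. -/
def OSC (m : ℕ) : Set (Fin m → Fin 8) :=
  {c | ∀ i : ℕ, ∀ h : i + 2 < m,
      ¬(c ⟨i + 2, h⟩ = 0 ∧ c ⟨i + 1, by omega⟩ = 2 ∧ c ⟨i, by omega⟩ = 0) ∧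
      ¬(c ⟨i + 2, h⟩ = 7 ∧ c ⟨i + 1, by omega⟩ = 5 ∧ c ⟨i, by omega⟩ = 7)}

lemma mem_OSC {m : ℕ} (c : Fin m → Fin 8) :
    c ∈ OSC m ↔ ∀ i : ℕ, ∀ h : i + 2 < m,
      ¬(c ⟨i + 2, h⟩ = 0 ∧ c ⟨i + 1, by omega⟩ = 2 ∧ c ⟨i, by omega⟩ = 0) ∧
      ¬(c ⟨i + 2, h⟩ = 7 ∧ c ⟨i + 1, by omega⟩ = 5 ∧ c ⟨i, by omega⟩ = 7) := Iff.rfl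

def snoc' {m : ℕ} (w : Fin m → Fin 8) (s : Fin 8) : Fin (m + 1) → Fin 8 :=
  fun j => if h : (j : ℕ) < m then w ⟨j, h⟩ else s

lemma snoc'_lt {m : ℕ} (w : Fin m → Fin 8) (s : Fin 8) (i : ℕ) (hi : i < m + 1)
    (h : i < m) : snoc' w s ⟨i, hi⟩ = w ⟨i, h⟩ := dif_pos h

lemma snoc'_top {m : ℕ} (w : Fin m → Fin 8) (s : Fin 8) (hi : m < m + 1) :
    snoc' w s ⟨m, hi⟩ = s := dif_neg (lt_irrefl m)

def trunc {m : ℕ} (c : Fin (m + 1) → Fin 8) : Fin m → Fin 8 :=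
  fun j => c ⟨j, by omega⟩

lemma trunc_snoc {m : ℕ} (w : Fin m → Fin 8) (s : Fin 8) : trunc (snoc' w s) = w := by
  funext j
  simp only [trunc]
  rw [snoc'_lt w s j (by omega) j.isLt]

lemma snoc_trunc {m : ℕ} (c : Fin (m + 1) → Fin 8) :
    snoc' (trunc c) (c ⟨m, by omega⟩) = c := by
  funext j
  simp only [snoc', trunc]
  split
  · congr 1
  · congr 1
    have : (j : ℕ) = m := by omega
    exact Fin.ext this.symm

lemma mem_snoc {m : ℕ} (w : Fin (m + 2) → Fin 8) (s : Fin 8) :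
    snoc' w s ∈ OSC (m + 3) ↔ w ∈ OSC (m + 2) ∧
      ¬(s = 0 ∧ w ⟨m + 1, by omega⟩ = 2 ∧ w ⟨m, by omega⟩ = 0) ∧
      ¬(s = 7 ∧ w ⟨m + 1, by omega⟩ = 5 ∧ w ⟨m, by omega⟩ = 7) := by
  rw [mem_OSC, mem_OSC]
  constructor
  · intro H
    refine ⟨?_, ?_, ?_⟩
    · intro i h
      have hh := H i (by omega)
      rw [snoc'_lt w s (i+2) (by omega) (by omega),
          snoc'_lt w s (i+1) (by omega) (by omega),
          snoc'_lt w s i (by omega) (by omega)] at hh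
      exact hh
    · have hh := H m (by omega)
      rw [snoc'_top w s (by omega),
          snoc'_lt w s (m+1) (by omega) (by omega),
          snoc'_lt w s m (by omega) (by omega)] at hh
      exact hh.1
    · have hh := H m (by omega)
      rw [snoc'_top w s (by omega),
          snoc'_lt w s (m+1) (by omega) (by omega),
          snoc'_lt w s m (by omega) (by omega)] at hh
      exact hh.2
  · rintro ⟨Hw, H0, H7⟩ i h
    by_cases hc : i + 2 < m + 2
    · rw [snoc'_lt w s (i+2) (by omega) (by omega),
          snoc'_lt w s (i+1) (by omega) (by omega),
          snoc'_lt w s i (by omega) (by omega)]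
      exact Hw i hc
    · have hi : i = m := by omega
      subst hi
      rw [show (⟨i+2, h⟩ : Fin (i+3)) = ⟨i+2, by omega⟩ from rfl,
          snoc'_top w s (by omega),
          snoc'_lt w s (i+1) (by omega) (by omega),
          snoc'_lt w s i (by omega) (by omega)]
      exact ⟨H0, H7⟩

instance oscDec (m : ℕ) : DecidablePred (· ∈ OSC m) := fun c =>
  decidable_of_iff (∀ i < m, ∀ h : i + 2 < m,
      ¬(c ⟨i + 2, h⟩ = 0 ∧ c ⟨i + 1, by omega⟩ = 2 ∧ c ⟨i, by omega⟩ = 0) ∧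
      ¬(c ⟨i + 2, h⟩ = 7 ∧ c ⟨i + 1, by omega⟩ = 5 ∧ c ⟨i, by omega⟩ = 7)) (by
    show _ ↔ c ∈ OSC m
    rw [mem_OSC]
    constructor
    · intro H i h; exact H i (by omega) h
    · intro H i _ h; exact H i h)

def Fs (m : ℕ) : Finset (Fin m → Fin 8) := Finset.univ.filter (· ∈ OSC m)

lemma mem_Fs {m : ℕ} (c : Fin m → Fin 8) : c ∈ Fs m ↔ c ∈ OSC m := by
  simp [Fs]

def Nc (m : ℕ) : ℕ := (Fs m).card

def B2 (m : ℕ) : ℕ :=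
  ((Fs (m + 2)).filter (fun w => w ⟨m + 1, by omega⟩ = 2 ∧ w ⟨m, by omega⟩ = 0)).card

def B7 (m : ℕ) : ℕ :=
  ((Fs (m + 2)).filter (fun w => w ⟨m + 1, by omega⟩ = 5 ∧ w ⟨m, by omega⟩ = 7)).card


lemma h1lem (m : ℕ) : ((Fs (m+2) ×ˢ (Finset.univ : Finset (Fin 8))).filter
    (fun x => ¬(x.2 = 0 ∧ x.1 ⟨m+1, by omega⟩ = 2 ∧ x.1 ⟨m, by omega⟩ = 0) ∧
              ¬(x.2 = 7 ∧ x.1 ⟨m+1, by omega⟩ = 5 ∧ x.1 ⟨m, by omega⟩ = 7))).card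
    = Nc (m + 3) := by
  classical
  refine Finset.card_bij' (fun x _ => snoc' x.1 x.2)
    (fun c _ => (trunc c, c ⟨m+2, by omega⟩)) ?_ ?_ ?_ ?_
  · intro x hx
    rw [Finset.mem_filter, Finset.mem_product, mem_Fs] at hx
    rw [mem_Fs, mem_snoc]
    exact ⟨hx.1.1, hx.2⟩
  · intro c hc
    rw [mem_Fs] at hc
    have e : snoc' (trunc c) (c ⟨m+2, by omega⟩) = c := snoc_trunc c
    rw [← e, mem_snoc] at hc
    rw [Finset.mem_filter, Finset.mem_product, mem_Fs]
    exact ⟨⟨hc.1, Finset.mem_univ _⟩, hc.2⟩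
  · intro x _
    exact Prod.ext (trunc_snoc x.1 x.2) (snoc'_top x.1 x.2 (by omega))
  · intro c _
    exact snoc_trunc c

lemma h20lem (m : ℕ) : ((Fs (m+2) ×ˢ (Finset.univ : Finset (Fin 8))).filter
    (fun x => x.2 = 0 ∧ x.1 ⟨m+1, by omega⟩ = 2 ∧ x.1 ⟨m, by omega⟩ = 0)).card = B2 m := by
  classical
  refine Finset.card_bij' (fun x _ => x.1) (fun w _ => (w, 0)) ?_ ?_ ?_ ?_
  · intro x hx
    rw [Finset.mem_filter, Finset.mem_product, mem_Fs] at hx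
    rw [Finset.mem_filter, mem_Fs]
    exact ⟨hx.1.1, hx.2.2⟩
  · intro w hw
    rw [Finset.mem_filter, mem_Fs] at hw
    rw [Finset.mem_filter, Finset.mem_product, mem_Fs]
    exact ⟨⟨hw.1, Finset.mem_univ _⟩, rfl, hw.2⟩
  · intro x hx
    rw [Finset.mem_filter] at hx
    exact Prod.ext rfl hx.2.1.symm
  · intro w _; rfl

lemma h27lem (m : ℕ) : ((Fs (m+2) ×ˢ (Finset.univ : Finset (Fin 8))).filter
    (fun x => x.2 = 7 ∧ x.1 ⟨m+1, by omega⟩ = 5 ∧ x.1 ⟨m, by omega⟩ = 7)).card = B7 m := by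
  classical
  refine Finset.card_bij' (fun x _ => x.1) (fun w _ => (w, 7)) ?_ ?_ ?_ ?_
  · intro x hx
    rw [Finset.mem_filter, Finset.mem_product, mem_Fs] at hx
    rw [Finset.mem_filter, mem_Fs]
    exact ⟨hx.1.1, hx.2.2⟩
  · intro w hw
    rw [Finset.mem_filter, mem_Fs] at hw
    rw [Finset.mem_filter, Finset.mem_product, mem_Fs]
    exact ⟨⟨hw.1, Finset.mem_univ _⟩, rfl, hw.2⟩
  · intro x hx
    rw [Finset.mem_filter] at hx
    exact Prod.ext rfl hx.2.1.symm
  · intro w _; rfl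

set_option maxHeartbeats 4000000 in
lemma L1 (m : ℕ) : Nc (m + 3) + B2 m + B7 m = 8 * Nc (m + 2) := by
  classical
  have hT : (Fs (m+2) ×ˢ (Finset.univ : Finset (Fin 8))).card = Nc (m+2) * 8 := by
    simp [Nc]
  have hsplit := Finset.card_filter_add_card_filter_not
    (s := Fs (m+2) ×ˢ (Finset.univ : Finset (Fin 8)))
    (p := fun x => ¬(x.2 = 0 ∧ x.1 ⟨m+1, by omega⟩ = 2 ∧ x.1 ⟨m, by omega⟩ = 0) ∧
              ¬(x.2 = 7 ∧ x.1 ⟨m+1, by omega⟩ = 5 ∧ x.1 ⟨m, by omega⟩ = 7))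
  rw [h1lem] at hsplit
  have h2 : ((Fs (m+2) ×ˢ (Finset.univ : Finset (Fin 8))).filter
      (fun x => ¬(¬(x.2 = 0 ∧ x.1 ⟨m+1, by omega⟩ = 2 ∧ x.1 ⟨m, by omega⟩ = 0) ∧
              ¬(x.2 = 7 ∧ x.1 ⟨m+1, by omega⟩ = 5 ∧ x.1 ⟨m, by omega⟩ = 7)))).card
      = B2 m + B7 m := by
    have hiff : ∀ x ∈ Fs (m+2) ×ˢ (Finset.univ : Finset (Fin 8)),
        (¬(¬(x.2 = 0 ∧ x.1 ⟨m+1, by omega⟩ = 2 ∧ x.1 ⟨m, by omega⟩ = 0) ∧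
           ¬(x.2 = 7 ∧ x.1 ⟨m+1, by omega⟩ = 5 ∧ x.1 ⟨m, by omega⟩ = 7)) ↔
        ((x.2 = 0 ∧ x.1 ⟨m+1, by omega⟩ = 2 ∧ x.1 ⟨m, by omega⟩ = 0) ∨
         (x.2 = 7 ∧ x.1 ⟨m+1, by omega⟩ = 5 ∧ x.1 ⟨m, by omega⟩ = 7))) := by
      intro x _; tauto
    have hdis : Disjoint
        ((Fs (m+2) ×ˢ (Finset.univ : Finset (Fin 8))).filter
          (fun x => x.2 = 0 ∧ x.1 ⟨m+1, by omega⟩ = 2 ∧ x.1 ⟨m, by omega⟩ = 0))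
        ((Fs (m+2) ×ˢ (Finset.univ : Finset (Fin 8))).filter
          (fun x => x.2 = 7 ∧ x.1 ⟨m+1, by omega⟩ = 5 ∧ x.1 ⟨m, by omega⟩ = 7)) := by
      rw [Finset.disjoint_left]
      intro x hx hx'
      rw [Finset.mem_filter] at hx hx'
      have h0 : x.2 = 0 := hx.2.1
      have h7 : x.2 = 7 := hx'.2.1
      rw [h0] at h7
      exact absurd h7 (by decide)
    rw [Finset.filter_congr hiff, Finset.filter_or,
        Finset.card_union_of_disjoint hdis, h20lem, h27lem]
  rw [h2, hT] at hsplit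
  omega

lemma snoc'_lt' {m : ℕ} (w : Fin m → Fin 8) (s : Fin 8) (j : Fin (m + 1))
    (h : (j : ℕ) < m) : snoc' w s j = w ⟨j, h⟩ := dif_pos h

lemma snoc'_ge' {m : ℕ} (w : Fin m → Fin 8) (s : Fin 8) (j : Fin (m + 1))
    (h : ¬ (j : ℕ) < m) : snoc' w s j = s := dif_neg h

lemma recon2 {m : ℕ} (u : Fin (m + 4) → Fin 8) (a b : Fin 8)
    (h3 : u ⟨m + 3, by omega⟩ = a) (h2 : u ⟨m + 2, by omega⟩ = b) :
    snoc' (snoc' (trunc (trunc u)) b) a = u := by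
  funext j
  by_cases hj1 : (j : ℕ) < m + 2
  · rw [snoc'_lt' _ _ j (by omega), snoc'_lt' _ _ _ (by simpa using hj1)]
    exact congrArg u (Fin.ext rfl)
  · by_cases hj2 : (j : ℕ) < m + 3
    · rw [snoc'_lt' _ _ j hj2, snoc'_ge' _ _ _ (by simpa using hj1), ← h2]
      exact (congrArg u (Fin.ext (by simp only [Fin.val_mk]; omega))).symm
    · rw [snoc'_ge' _ _ j hj2, ← h3]
      exact (congrArg u (Fin.ext (by simp only [Fin.val_mk]; omega))).symm

set_option maxHeartbeats 1000000 in
lemma L2 (m : ℕ) : B2 m + B2 (m + 2) = Nc (m + 2) := by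
  classical
  have hsplit := Finset.card_filter_add_card_filter_not (s := Fs (m+2))
      (p := fun w => w ⟨m+1, Nat.lt_succ_self (m+1)⟩ = 2 ∧ w ⟨m, Nat.lt_succ_of_lt (Nat.lt_succ_self m)⟩ = 0)
  have h2 : ((Fs (m+2)).filter
      (fun w => ¬(w ⟨m+1, Nat.lt_succ_self (m+1)⟩ = 2 ∧ w ⟨m, Nat.lt_succ_of_lt (Nat.lt_succ_self m)⟩ = 0))).card = B2 (m+2) := by
    refine Finset.card_bij' (fun w _ => snoc' (snoc' w 0) 2)
      (fun u _ => trunc (trunc u)) ?_ ?_ ?_ ?_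
    · intro w hw
      rw [Finset.mem_filter, mem_Fs] at hw
      rw [Finset.mem_filter, mem_Fs]
      refine ⟨?_, ?_, ?_⟩
      · show snoc' (snoc' w 0) 2 ∈ OSC (m + 4)
        rw [mem_snoc]
        refine ⟨?_, by simp, by simp⟩
        rw [mem_snoc]
        refine ⟨hw.1, ?_, by simp⟩
        intro h
        exact hw.2 ⟨h.2.1, h.2.2⟩
      · show snoc' (snoc' w 0) 2 ⟨m + 3, Nat.lt_succ_self (m+3)⟩ = 2
        exact snoc'_top (snoc' w 0) 2 (Nat.lt_succ_self (m+3))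
      · show snoc' (snoc' w 0) 2 ⟨m + 2, Nat.lt_succ_of_lt (Nat.lt_succ_self (m+2))⟩ = 0
        rw [snoc'_lt (snoc' w 0) 2 (m+2) (Nat.lt_succ_of_lt (Nat.lt_succ_self (m+2))) (Nat.lt_succ_self (m+2))]
        exact snoc'_top w 0 (Nat.lt_succ_self (m+2))
    · intro u hu
      rw [Finset.mem_filter, mem_Fs] at hu
      obtain ⟨huv, ht2, ht0⟩ := hu
      have e := recon2 u 2 0 ht2 ht0
      rw [← e, mem_snoc] at huv
      have huv2 := huv.1
      rw [mem_snoc] at huv2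
      rw [Finset.mem_filter, mem_Fs]
      refine ⟨huv2.1, ?_⟩
      show ¬(trunc (trunc u) ⟨m+1, Nat.lt_succ_self (m+1)⟩ = 2 ∧
             trunc (trunc u) ⟨m, Nat.lt_succ_of_lt (Nat.lt_succ_self m)⟩ = 0)
      intro h
      exact huv2.2.1 ⟨rfl, h.1, h.2⟩
    · intro w _
      show trunc (trunc (snoc' (snoc' w 0) 2)) = w
      rw [trunc_snoc, trunc_snoc]
    · intro u hu
      rw [Finset.mem_filter, mem_Fs] at hu
      exact recon2 u 2 0 hu.2.1 hu.2.2
  rw [h2] at hsplit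
  have h1 : ((Fs (m+2)).filter
      (fun w => w ⟨m+1, Nat.lt_succ_self (m+1)⟩ = 2 ∧ w ⟨m, Nat.lt_succ_of_lt (Nat.lt_succ_self m)⟩ = 0)).card = B2 m := rfl
  rw [h1] at hsplit
  exact hsplit

set_option maxHeartbeats 1000000 in
lemma L2' (m : ℕ) : B7 m + B7 (m + 2) = Nc (m + 2) := by
  classical
  have hsplit := Finset.card_filter_add_card_filter_not (s := Fs (m+2))
      (p := fun w => w ⟨m+1, Nat.lt_succ_self (m+1)⟩ = 5 ∧ w ⟨m, Nat.lt_succ_of_lt (Nat.lt_succ_self m)⟩ = 7)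
  have h2 : ((Fs (m+2)).filter
      (fun w => ¬(w ⟨m+1, Nat.lt_succ_self (m+1)⟩ = 5 ∧ w ⟨m, Nat.lt_succ_of_lt (Nat.lt_succ_self m)⟩ = 7))).card = B7 (m+2) := by
    refine Finset.card_bij' (fun w _ => snoc' (snoc' w 7) 5)
      (fun u _ => trunc (trunc u)) ?_ ?_ ?_ ?_
    · intro w hw
      rw [Finset.mem_filter, mem_Fs] at hw
      rw [Finset.mem_filter, mem_Fs]
      refine ⟨?_, ?_, ?_⟩
      · show snoc' (snoc' w 7) 5 ∈ OSC (m + 4)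
        rw [mem_snoc]
        refine ⟨?_, by simp, by simp⟩
        rw [mem_snoc]
        refine ⟨hw.1, by simp, ?_⟩
        intro h
        exact hw.2 ⟨h.2.1, h.2.2⟩
      · show snoc' (snoc' w 7) 5 ⟨m + 3, Nat.lt_succ_self (m+3)⟩ = 5
        exact snoc'_top (snoc' w 7) 5 (Nat.lt_succ_self (m+3))
      · show snoc' (snoc' w 7) 5 ⟨m + 2, Nat.lt_succ_of_lt (Nat.lt_succ_self (m+2))⟩ = 7
        rw [snoc'_lt (snoc' w 7) 5 (m+2) (Nat.lt_succ_of_lt (Nat.lt_succ_self (m+2))) (Nat.lt_succ_self (m+2))]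
        exact snoc'_top w 7 (Nat.lt_succ_self (m+2))
    · intro u hu
      rw [Finset.mem_filter, mem_Fs] at hu
      obtain ⟨huv, ht2, ht0⟩ := hu
      have e := recon2 u 5 7 ht2 ht0
      rw [← e, mem_snoc] at huv
      have huv2 := huv.1
      rw [mem_snoc] at huv2
      rw [Finset.mem_filter, mem_Fs]
      refine ⟨huv2.1, ?_⟩
      show ¬(trunc (trunc u) ⟨m+1, Nat.lt_succ_self (m+1)⟩ = 5 ∧
             trunc (trunc u) ⟨m, Nat.lt_succ_of_lt (Nat.lt_succ_self m)⟩ = 7)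
      intro h
      exact huv2.2.2 ⟨rfl, h.1, h.2⟩
    · intro w _
      show trunc (trunc (snoc' (snoc' w 7) 5)) = w
      rw [trunc_snoc, trunc_snoc]
    · intro u hu
      rw [Finset.mem_filter, mem_Fs] at hu
      exact recon2 u 5 7 hu.2.1 hu.2.2
  rw [h2] at hsplit
  have h1 : ((Fs (m+2)).filter
      (fun w => w ⟨m+1, Nat.lt_succ_self (m+1)⟩ = 5 ∧ w ⟨m, Nat.lt_succ_of_lt (Nat.lt_succ_self m)⟩ = 7)).card = B7 m := rfl
  rw [h1] at hsplit
  exact hsplit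

lemma Nc1 : Nc 1 = 8 := by decide
lemma Nc2 : Nc 2 = 64 := by decide
set_option maxRecDepth 100000 in
lemma Nc3 : Nc 3 = 510 := by decide
lemma B21 : B2 1 = 8 := by decide
lemma B71 : B7 1 = 8 := by decide

lemma Nc4 : Nc 4 = 4064 := by
  have a := L1 1
  rw [show 1+3 = 4 from rfl, show 1+2 = 3 from rfl, Nc3, B21, B71] at a
  omega

lemma key (m : ℕ) : Nc (m+5) + Nc (m+3) = 8 * Nc (m+4) + 6 * Nc (m+2) := by
  have a := L1 (m+2)
  rw [show m+2+3 = m+5 from by omega, show m+2+2 = m+4 from by omega] at a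
  have b := L1 m
  have c := L2 m
  have d := L2' m
  omega

lemma ncard_eq (m : ℕ) : (OSC m).ncard = Nc m := by
  classical
  have h : OSC m = ↑(Fs m) := by
    ext c; simp [Fs]
  rw [h, Set.ncard_coe_finset]
  rfl

theorem stmt5 (f : ℤ → ℚ)
    (hb2 : f (-2) = 1 / 36) (hb1 : f (-1) = 1 / 6) (hb0 : f 0 = 1) (hb : f 1 = 8)
    (hrec : ∀ k : ℤ, 2 ≤ k → f k = 8 * f (k - 1) - f (k - 2) + 6 * f (k - 3)) :
    ∀ m : ℕ, 1 ≤ m → ((OSC m).ncard : ℚ) = f m := by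
  have hf2 : f 2 = 64 := by
    have h := hrec 2 (by norm_num)
    norm_num at h
    rw [hb, hb0, hb1] at h
    rw [h]; norm_num
  have hf3 : f 3 = 510 := by
    have h := hrec 3 (by norm_num)
    norm_num at h
    rw [hf2, hb, hb0] at h
    rw [h]; norm_num
  have hf4 : f 4 = 4064 := by
    have h := hrec 4 (by norm_num)
    norm_num at h
    rw [hf3, hf2, hb] at h
    rw [h]; norm_num
  have main : ∀ m : ℕ, 1 ≤ m → ((Nc m : ℚ)) = f m := by
    intro m
    induction m using Nat.strong_induction_on with
    | _ m ih =>
      intro hm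
      rcases m with _|_|_|_|_|k
      · omega
      · rw [Nc1]; norm_num [hb]
      · rw [show (0+1+1 : ℕ) = 2 from rfl, Nc2]; norm_num [hf2]
      · rw [show (0+1+1+1 : ℕ) = 3 from rfl, Nc3]; norm_num [hf3]
      · rw [show (0+1+1+1+1 : ℕ) = 4 from rfl, Nc4]; norm_num [hf4]
      · show (Nc (k+5) : ℚ) = f ((k : ℤ) + 5)
        have h4 := ih (k+4) (by omega) (by omega)
        have h3 := ih (k+3) (by omega) (by omega)
        have h2 := ih (k+2) (by omega) (by omega)
        have hkQ : (Nc (k+5) : ℚ) + Nc (k+3) = 8 * Nc (k+4) + 6 * Nc (k+2) := by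
          exact_mod_cast key k
        have hr := hrec ((k:ℤ)+5) (by omega)
        rw [show ((k:ℤ)+5-1) = (k:ℤ)+4 from by ring,
            show ((k:ℤ)+5-2) = (k:ℤ)+3 from by ring,
            show ((k:ℤ)+5-3) = (k:ℤ)+2 from by ring] at hr
        push_cast at h4 h3 h2
        linarith [hkQ, hr, h4, h3, h2]
  intro m hm
  rw [ncard_eq]
  exact main m hm
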